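/- arXiv:2301.05877 — 2 statements merged into one kernel-verified Lean document; each statement's English description precedes it below -/
import Mathlib

section
/- Let Λ be a graph, Λ' a subgraph of Λ, and suppose Λ is a forest relative to Λ'. If C is a connected component of Λ such that C ∩ Λ' ≠ ∅, then at most one connected component of C ∩ Λ' fails to be a tree (i.e., at most one connected component of C ∩ Λ' contains a reduced cycle). -/
/-- A combinatorial graph (Serre style): edges come with a fixed-point-free
reversal involution; loops and multiple edges are allowed. -/
structure SGraph where
  V : Type
  E : Type
  init : E → V
  bar : E → E
  bar_bar : ∀ e, bar (bar e) = e
  bar_ne : ∀ e, bar e ≠ e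

namespace SGraph

variable (G : SGraph)

/-- Terminal vertex of an edge. -/
def term (e : G.E) : G.V := G.init (G.bar e)

/-- Consecutive edges of the list match up. -/
def IsChain (l : List G.E) : Prop :=
  List.Chain' (fun e f => G.term e = G.init f) l

/-- A cycle: a nonempty closed edge path. -/
def IsCycle (l : List G.E) : Prop :=
  l ≠ [] ∧ G.IsChain l ∧
    ∀ e f, l.head? = some e → l.getLast? = some f → G.term f = G.init e

/-- A reduced cycle: no edge is followed (cyclically) by its reverse. -/
def IsReducedCycle (l : List G.E) : Prop :=
  G.IsCycle l ∧ List.Chain' (fun e f => f ≠ G.bar e) l ∧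
    ∀ e f, l.head? = some e → l.getLast? = some f → e ≠ G.bar f

/-- A graph is a forest if it contains no reduced cycle. -/
def IsForestGraph : Prop := ∀ l, ¬ G.IsReducedCycle l

/-- A subgraph: a set of vertices and a set of edges, closed under reversal,
with endpoints among the chosen vertices. -/
structure Subgraph (G : SGraph) where
  verts : Set G.V
  edges : Set G.E
  bar_mem : ∀ ⦃e⦄, e ∈ edges → G.bar e ∈ edges
  init_mem : ∀ ⦃e⦄, e ∈ edges → G.init e ∈ verts

variable {G}

namespace Subgraph

/-- Subgraph containment. -/
def le (H K : Subgraph G) : Prop := H.verts ⊆ K.verts ∧ H.edges ⊆ K.edges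

/-- Intersection of two subgraphs. -/
def inter (H K : Subgraph G) : Subgraph G where
  verts := H.verts ∩ K.verts
  edges := H.edges ∩ K.edges
  bar_mem := fun _ he => ⟨H.bar_mem he.1, K.bar_mem he.2⟩
  init_mem := fun _ he => ⟨H.init_mem he.1, K.init_mem he.2⟩

/-- All edges of the list lie in the subgraph. -/
def EdgesIn (H : Subgraph G) (l : List G.E) : Prop := ∀ e ∈ l, e ∈ H.edges

/-- A reduced cycle contained in the subgraph. -/
def IsReducedCycleIn (H : Subgraph G) (l : List G.E) : Prop :=
  G.IsReducedCycle l ∧ H.EdgesIn l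

/-- A subgraph is a forest if it contains no reduced cycle. -/
def IsForest (H : Subgraph G) : Prop := ∀ l, ¬ H.IsReducedCycleIn l

/-- Reachability inside a subgraph by edge paths. -/
inductive Reaches (H : Subgraph G) : G.V → G.V → Prop
  | refl (v : G.V) (hv : v ∈ H.verts) : Reaches H v v
  | step (e : G.E) (he : e ∈ H.edges) {q : G.V} (h : Reaches H (G.term e) q) :
      Reaches H (G.init e) q

/-- A subgraph is connected if it is nonempty and any two of its vertices are
joined by an edge path in it. -/
def Connected (H : Subgraph G) : Prop :=
  H.verts.Nonempty ∧ ∀ p ∈ H.verts, ∀ q ∈ H.verts, H.Reaches p q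

/-- A tree is a connected forest. -/
def IsTree (H : Subgraph G) : Prop := H.IsForest ∧ H.Connected

/-- `C` is a connected component of `H`: its vertices form a reachability class
of `H` and its edges are the induced ones. -/
def IsCompOf (C H : Subgraph G) : Prop :=
  ∃ v ∈ H.verts, C.verts = {w | H.Reaches v w} ∧
    C.edges = {e | e ∈ H.edges ∧ G.init e ∈ C.verts}

/-- `H` is a forest relative to `H'`: every reduced cycle of `H` is contained
in `H'`. -/
def ForestRel (H H' : Subgraph G) : Prop :=
  ∀ l, H.IsReducedCycleIn l → H'.EdgesIn l

/-- `H` is a strong forest relative to `H'`: a relative forest such that each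
component of `H` meets `H'` in an empty or connected subgraph. -/
def StrongForestRel (H H' : Subgraph G) : Prop :=
  H.ForestRel H' ∧
    ∀ C : Subgraph G, C.IsCompOf H → (C.inter H').verts = ∅ ∨ (C.inter H').Connected

/-- Euler characteristic: number of vertices minus number of (geometric)
edges; each geometric edge corresponds to a pair `{e, ē}`. -/
noncomputable def eulerChar (H : Subgraph G) : ℤ :=
  (H.verts.ncard : ℤ) - ((H.edges.ncard / 2 : ℕ) : ℤ)

/-- A walk in `H` from `p` to `q`, given as its list of traversed edges. -/
def IsWalk (H : Subgraph G) (p q : G.V) (l : List G.E) : Prop :=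
  H.EdgesIn l ∧ G.IsChain l ∧
    (∀ e, l.head? = some e → G.init e = p) ∧
    (∀ e, l.getLast? = some e → G.term e = q) ∧
    (l = [] → p = q ∧ p ∈ H.verts)

/-- The weight-0 subgraph of a zero/one-weighted subgraph: all of its vertices
together with its edges of weight 0. -/
def zeroSub (H : Subgraph G) (ω : G.E → ℕ) (hbar : ∀ e, ω (G.bar e) = ω e) :
    Subgraph G where
  verts := H.verts
  edges := {e | e ∈ H.edges ∧ ω e = 0}
  bar_mem := fun e he => ⟨H.bar_mem he.1, by rw [hbar]; exact he.2⟩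
  init_mem := fun _ he => H.init_mem he.1

end Subgraph

/-- The full subgraph of a graph. -/
def full (G : SGraph) : Subgraph G where
  verts := Set.univ
  edges := Set.univ
  bar_mem := fun _ _ => Set.mem_univ _
  init_mem := fun _ _ => Set.mem_univ _

open Classical in
/-- The quotient graph `G/H'` obtained by identifying the subgraph `H'` to a
single vertex `∗` (represented by `none`): its vertices are the vertices of
`G` not in `H'` together with `∗`; its edges are the edges of `G` not in `H'`,
with endpoints in `H'` replaced by `∗`. -/
noncomputable def quot (G : SGraph) (H' : Subgraph G) : SGraph where
  V := Option {v : G.V // v ∉ H'.verts}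
  E := {e : G.E // e ∉ H'.edges}
  init e := if h : G.init e.1 ∈ H'.verts then none else some ⟨G.init e.1, h⟩
  bar e := ⟨G.bar e.1, fun hc => e.2 (by simpa [G.bar_bar] using H'.bar_mem hc)⟩
  bar_bar e := Subtype.ext (G.bar_bar e.1)
  bar_ne e := fun hc => G.bar_ne e.1 (congrArg Subtype.val hc)

end SGraph

namespace SGraph

variable {G : SGraph}

/-- No-cancellation condition on a list of edges. -/
def NC (G : SGraph) (l : List G.E) : Prop :=
  List.Chain' (fun e f => f ≠ G.bar e) l

lemma term_bar (e : G.E) : G.term (G.bar e) = G.init e := by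
  show G.init (G.bar (G.bar e)) = G.init e
  rw [G.bar_bar]

lemma bar_inj {e f : G.E} (h : G.bar e = G.bar f) : e = f := by
  have := congrArg G.bar h
  rwa [G.bar_bar, G.bar_bar] at this

namespace Subgraph

lemma ext' {H K : Subgraph G} (hv : H.verts = K.verts) (he : H.edges = K.edges) :
    H = K := by
  cases H; cases K; simp_all

lemma Reaches.mem_right {H : Subgraph G} {v w : G.V} (h : H.Reaches v w) :
    w ∈ H.verts := by
  induction h with
  | refl v hv => exact hv
  | step e he h ih => exact ih

lemma Reaches.mem_left {H : Subgraph G} {v w : G.V} (h : H.Reaches v w) :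
    v ∈ H.verts := by
  cases h with
  | refl v hv => exact hv
  | step e he h => exact H.init_mem he

lemma Reaches.trans {H : Subgraph G} {u v w : G.V} (h1 : H.Reaches u v)
    (h2 : H.Reaches v w) : H.Reaches u w := by
  induction h1 with
  | refl => exact h2
  | step e he h ih => exact .step e he (ih h2)

lemma Reaches.single {H : Subgraph G} {e : G.E} (he : e ∈ H.edges) :
    H.Reaches (G.init e) (G.term e) :=
  .step e he (.refl _ (H.init_mem (H.bar_mem he)))

lemma Reaches.symm {H : Subgraph G} {v w : G.V} (h : H.Reaches v w) :
    H.Reaches w v := by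
  induction h with
  | refl v hv => exact .refl v hv
  | step e he h ih =>
      refine ih.trans ?_
      have := Reaches.single (H.bar_mem he)
      rwa [term_bar] at this

lemma Reaches.exists_walk {H : Subgraph G} {p q : G.V} (h : H.Reaches p q) :
    ∃ l, H.IsWalk p q l := by
  induction h with
  | refl v hv =>
      exact ⟨[], fun e he => absurd he List.not_mem_nil, List.isChain_nil,
        by simp, by simp, fun _ => ⟨rfl, hv⟩⟩
  | step e he h ih =>
      obtain ⟨l, hed, hch, hhd, hlast, hnil⟩ := ih
      refine ⟨e :: l, ?_, ?_, ?_, ?_, ?_⟩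
      · intro f hf
        rcases List.mem_cons.mp hf with rfl | hf
        · exact he
        · exact hed f hf
      · refine List.isChain_cons.mpr ⟨fun b hb => ?_, hch⟩
        exact (hhd b hb).symm
      · intro f hf
        simp only [List.head?_cons, Option.some_inj] at hf
        subst hf; rfl
      · intro f hf
        cases l with
        | nil =>
            simp only [List.getLast?_singleton, Option.some_inj] at hf
            subst hf
            exact (hnil rfl).1
        | cons a t =>
            rw [List.getLast?_cons_cons] at hf
            exact hlast f hf
      · intro hc; exact absurd hc (by simp)

lemma IsWalk.mono {H K : Subgraph G} {p q : G.V} {l : List G.E}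
    (hv : H.verts ⊆ K.verts) (he : H.edges ⊆ K.edges) (h : H.IsWalk p q l) :
    K.IsWalk p q l :=
  ⟨fun e hel => he (h.1 e hel), h.2.1, h.2.2.1, h.2.2.2.1,
    fun hn => ⟨(h.2.2.2.2 hn).1, hv (h.2.2.2.2 hn).2⟩⟩

lemma IsWalk.tail {H : Subgraph G} {p q : G.V} {e : G.E} {l : List G.E}
    (h : H.IsWalk p q (e :: l)) : H.IsWalk (G.term e) q l := by
  obtain ⟨hed, hch, hhd, hlast, hnil⟩ := h
  have hel : e ∈ H.edges := hed e (List.mem_cons_self)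
  refine ⟨fun f hf => hed f (List.mem_cons_of_mem e hf), (List.isChain_cons.mp hch).2,
    ?_, ?_, ?_⟩
  · intro f hf
    exact ((List.isChain_cons.mp hch).1 f hf).symm
  · intro f hf
    refine hlast f ?_
    cases l with
    | nil => simp at hf
    | cons a t => rwa [List.getLast?_cons_cons]
  · intro hc
    subst hc
    constructor
    · exact hlast e (by simp)
    · exact H.init_mem (H.bar_mem hel)

lemma IsWalk.rbar {H : Subgraph G} {p q : G.V} {l : List G.E}
    (h : H.IsWalk p q l) : H.IsWalk q p ((l.map G.bar).reverse) := by
  obtain ⟨hed, hch, hhd, hlast, hnil⟩ := h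
  refine ⟨?_, ?_, ?_, ?_, ?_⟩
  · intro f hf
    simp only [List.mem_reverse, List.mem_map] at hf
    obtain ⟨a, ha, rfl⟩ := hf
    exact H.bar_mem (hed a ha)
  · rw [show G.IsChain ((l.map G.bar).reverse) ↔ _ from List.isChain_reverse]
    rw [List.isChain_map]
    refine List.IsChain.imp ?_ hch
    intro a b hab
    show G.term (G.bar b) = G.init (G.bar a)
    rw [term_bar]
    exact hab.symm
  · intro f hf
    rw [← List.map_reverse, List.head?_map, List.head?_reverse] at hf
    obtain ⟨a, ha, rfl⟩ := Option.map_eq_some_iff.mp hf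
    show G.init (G.bar a) = q
    rw [show G.init (G.bar a) = G.term a from rfl]
    exact hlast a ha
  · intro f hf
    rw [List.getLast?_reverse, List.head?_map] at hf
    obtain ⟨a, ha, rfl⟩ := Option.map_eq_some_iff.mp hf
    rw [term_bar]
    exact hhd a ha
  · intro hc
    simp only [List.reverse_eq_nil_iff, List.map_eq_nil_iff] at hc
    obtain ⟨h1, h2⟩ := hnil hc
    subst h1
    exact ⟨rfl, h2⟩

lemma rbar_rbar (l : List G.E) :
    (((l.map G.bar).reverse.map G.bar).reverse) = l := by
  rw [← List.map_reverse, List.reverse_reverse, List.map_map]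
  have : G.bar ∘ G.bar = id := funext G.bar_bar
  rw [this, List.map_id]

lemma NC.rbar {l : List G.E} (h : G.NC l) : G.NC ((l.map G.bar).reverse) := by
  unfold NC at *
  rw [List.Chain', List.isChain_reverse, List.isChain_map]
  refine List.IsChain.imp ?_ h
  intro a b hab
  show G.bar a ≠ G.bar (G.bar b)
  rw [G.bar_bar]
  intro hc
  exact hab (by rw [hc])

lemma not_chain'_decomp {α : Type*} {R : α → α → Prop} :
    ∀ (l : List α), ¬ l.Chain' R → ∃ a x y b, l = a ++ x :: y :: b ∧ ¬ R x y := by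
  intro l
  induction l with
  | nil => intro h; exact absurd List.isChain_nil h
  | cons x t ih =>
      intro h
      cases t with
      | nil => exact absurd (List.isChain_singleton x) h
      | cons y t' =>
          rw [List.Chain', List.isChain_cons_cons] at h
          by_cases hxy : R x y
          · have : ¬ (y :: t').Chain' R := fun hc => h ⟨hxy, hc⟩
            obtain ⟨a, x', y', b, heq, hr⟩ := ih this
            exact ⟨x :: a, x', y', b, by rw [heq]; rfl, hr⟩
          · exact ⟨[], x, y, t', rfl, hxy⟩

lemma IsWalk.delete {H : Subgraph G} {p q : G.V} {a b : List G.E} {e : G.E}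
    (h : H.IsWalk p q (a ++ e :: G.bar e :: b)) : H.IsWalk p q (a ++ b) := by
  obtain ⟨hed, hch, hhd, hlast, hnil⟩ := h
  have hee : e ∈ H.edges := hed e (by simp)
  have hchm := List.isChain_append.mp hch
  have hcha : G.IsChain a := hchm.1
  have hch2 := hchm.2.1
  rw [List.isChain_cons_cons] at hch2
  have hch3 := hch2.2
  rw [List.isChain_cons] at hch3
  have hchb : G.IsChain b := hch3.2
  have hjab : ∀ y ∈ b.head?, G.term (G.bar e) = G.init y := hch3.1
  have hja : ∀ x ∈ a.getLast?, G.term x = G.init e := by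
    intro x hx
    exact hchm.2.2 x hx e (by simp)
  have htbe : G.term (G.bar e) = G.init e := term_bar e
  refine ⟨?_, ?_, ?_, ?_, ?_⟩
  · intro f hf
    refine hed f ?_
    simp only [List.mem_append, List.mem_cons] at hf ⊢
    tauto
  · rw [show G.IsChain (a ++ b) ↔ _ from List.isChain_append]
    refine ⟨hcha, hchb, ?_⟩
    intro x hx y hy
    rw [hja x hx, ← htbe]
    exact hjab y hy
  · intro f hf
    cases a with
    | nil =>
        simp only [List.nil_append] at hf
        have h1 := hjab f hf
        have hp : G.init e = p := hhd e rfl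
        rw [← hp, ← htbe]
        exact h1.symm
    | cons a0 t =>
        simp only [List.cons_append, List.head?_cons, Option.some_inj] at hf
        subst hf
        exact hhd _ rfl
  · intro f hf
    rcases List.eq_nil_or_concat b with rfl | ⟨t, y, rfl⟩
    · rw [List.append_nil] at hf
      have h1 : G.term f = G.init e := hja f hf
      have hq : G.term (G.bar e) = q := by
        refine hlast (G.bar e) ?_
        rw [List.getLast?_append_of_ne_nil a (by simp)]
        rfl
      rw [h1, ← htbe]
      exact hq
    · rw [List.concat_eq_append] at *
      rw [List.getLast?_append_of_ne_nil a (by simp), List.getLast?_concat] at hf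
      refine hlast f ?_
      rw [List.getLast?_append_of_ne_nil a (by simp),
        show e :: G.bar e :: (t ++ [y]) = (e :: G.bar e :: t) ++ [y] from rfl,
        List.getLast?_concat]
      exact hf
  · intro hc
    rw [List.append_eq_nil_iff] at hc
    obtain ⟨rfl, rfl⟩ := hc
    have hp : G.init e = p := hhd e rfl
    have hq : G.term (G.bar e) = q := by
      refine hlast (G.bar e) ?_
      rfl
    rw [htbe] at hq
    exact ⟨by rw [← hp, ← hq], by rw [← hp]; exact H.init_mem hee⟩

lemma IsWalk.dropLastConcat {H : Subgraph G} {v u : G.V} {q₀ : List G.E} {x : G.E}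
    (h : H.IsWalk v u (q₀ ++ [x])) : H.IsWalk v (G.init x) q₀ := by
  obtain ⟨hed, hch, hhd, hlast, hnil⟩ := h
  have hx : x ∈ H.edges := hed x (by simp)
  have hchm := List.isChain_append.mp hch
  refine ⟨fun f hf => hed f (by simp [hf]), hchm.1, ?_, ?_, ?_⟩
  · intro f hf
    refine hhd f ?_
    rw [List.head?_append, hf]
    rfl
  · intro f hf
    exact hchm.2.2 f hf x rfl
  · intro hc
    subst hc
    have := hhd x (by simp)
    exact ⟨this.symm, by rw [← this]; exact H.init_mem hx⟩
lemma exists_min_walklist (P : List G.E → Prop) (h : ∃ l, P l) :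
    ∃ l, P l ∧ ∀ l', P l' → l.length ≤ l'.length := by
  classical
  obtain ⟨l0, hl0⟩ := h
  have H : ∃ n, ∃ l, P l ∧ l.length = n := ⟨l0.length, l0, hl0, rfl⟩
  obtain ⟨l, hl, hlen⟩ := Nat.find_spec H
  refine ⟨l, hl, fun l' hl' => ?_⟩
  rw [hlen]
  exact Nat.find_min' H ⟨l', hl', rfl⟩

/-- From a minimal-length element of a deletion-closed walk family, extract
no-cancellation. -/
lemma min_nc {P : List G.E → Prop}
    (hdel : ∀ a b (e : G.E), P (a ++ e :: G.bar e :: b) → P (a ++ b))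
    {l : List G.E} (hl : P l) (hmin : ∀ l', P l' → l.length ≤ l'.length) :
    G.NC l := by
  by_contra hc
  obtain ⟨a, x, y, b, rfl, hr⟩ := not_chain'_decomp l hc
  rw [not_not] at hr
  subst hr
  have := hmin (a ++ b) (hdel a b x hl)
  simp at this

lemma Reaches.exists_reduced_walk {H : Subgraph G} {p q : G.V}
    (h : H.Reaches p q) : ∃ l, H.IsWalk p q l ∧ G.NC l := by
  obtain ⟨l, hl, hmin⟩ := exists_min_walklist (fun l => H.IsWalk p q l) h.exists_walk
  exact ⟨l, hl, min_nc (fun a b e hw => hw.delete) hl hmin⟩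

/-- Generic rotation of a cyclic chain condition. -/
lemma cyc_rot {α : Type*} {R : α → α → Prop} {x : α} {t : List α}
    (hc : (x :: t).Chain' R)
    (hw : ∀ a b, (x :: t).head? = some a → (x :: t).getLast? = some b → R b a) :
    (t ++ [x]).Chain' R ∧
      ∀ a b, (t ++ [x]).head? = some a → (t ++ [x]).getLast? = some b → R b a := by
  cases t with
  | nil => exact ⟨hc, fun a b ha hb => by
      simp only [List.nil_append, List.head?_cons, List.getLast?_singleton,
        Option.some_inj] at ha hb
      subst ha; subst hb
      exact hw x x rfl rfl⟩
  | cons f t' =>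
      constructor
      · rw [List.Chain', List.isChain_append]
        refine ⟨(List.isChain_cons.mp hc).2, List.isChain_singleton x, ?_⟩
        intro a ha y hy
        simp only [List.head?_cons, Option.mem_def, Option.some_inj] at hy
        subst hy
        exact hw x a rfl (by rw [List.getLast?_cons_cons]; exact ha)
      · intro a b ha hb
        rw [List.getLast?_append_of_ne_nil _ (by simp), List.getLast?_singleton] at hb
        rw [show (f :: t') ++ [x] = f :: (t' ++ [x]) from rfl, List.head?_cons] at ha
        obtain rfl : f = a := Option.some_inj.mp ha
        obtain rfl : x = b := Option.some_inj.mp hb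
        exact (List.isChain_cons_cons.mp hc).1

/-- Generic reverse rotation of a cyclic chain condition. -/
lemma cyc_rot' {α : Type*} {R : α → α → Prop} {x : α} {t : List α}
    (hc : (t ++ [x]).Chain' R)
    (hw : ∀ a b, (t ++ [x]).head? = some a → (t ++ [x]).getLast? = some b → R b a) :
    (x :: t).Chain' R ∧
      ∀ a b, (x :: t).head? = some a → (x :: t).getLast? = some b → R b a := by
  cases t with
  | nil => exact ⟨hc, fun a b ha hb => by
      simp only [List.head?_cons, List.getLast?_singleton, Option.some_inj] at ha hb
      subst ha; subst hb
      exact hw x x rfl rfl⟩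
  | cons f t' =>
      have hcm := List.isChain_append.mp hc
      constructor
      · rw [List.Chain', List.isChain_cons]
        refine ⟨?_, hcm.1⟩
        intro y hy
        simp only [List.head?_cons, Option.mem_def, Option.some_inj] at hy
        subst hy
        exact hw f x rfl (by
          rw [List.getLast?_append_of_ne_nil _ (by simp)]; rfl)
      · intro a b ha hb
        simp only [List.head?_cons, Option.some_inj] at ha
        subst ha
        rw [show x :: f :: t' = x :: (f :: t') from rfl] at hb
        rw [List.getLast?_cons_cons] at hb
        have hb' : (f :: t').getLast? = some b := hb
        refine hcm.2.2 b ?_ x rfl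
        exact hb'
lemma rotRedCycleL {e : G.E} {t : List G.E} (h : G.IsReducedCycle (e :: t)) :
    G.IsReducedCycle (t ++ [e]) := by
  obtain ⟨⟨hne, hch, hwr⟩, hnc, hncw⟩ := h
  have h1 := cyc_rot (R := fun a b => G.term a = G.init b) hch
    (fun a b ha hb => hwr a b ha hb)
  have h2 := cyc_rot (R := fun a b => b ≠ G.bar a) hnc
    (fun a b ha hb => hncw a b ha hb)
  exact ⟨⟨by simp, h1.1, fun a b ha hb => h1.2 a b ha hb⟩, h2.1,
    fun a b ha hb => h2.2 a b ha hb⟩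

lemma rotRedCycleR {t : List G.E} {e : G.E} (h : G.IsReducedCycle (t ++ [e])) :
    G.IsReducedCycle (e :: t) := by
  obtain ⟨⟨hne, hch, hwr⟩, hnc, hncw⟩ := h
  have h1 := cyc_rot' (R := fun a b => G.term a = G.init b) hch
    (fun a b ha hb => hwr a b ha hb)
  have h2 := cyc_rot' (R := fun a b => b ≠ G.bar a) hnc
    (fun a b ha hb => hncw a b ha hb)
  exact ⟨⟨by simp, h1.1, fun a b ha hb => h1.2 a b ha hb⟩, h2.1,
    fun a b ha hb => h2.2 a b ha hb⟩

lemma conj_aux (Λ' : Subgraph G) :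
    ∀ (n : ℕ) (q c : List G.E) (v u : G.V),
      q.length ≤ n →
      Λ'.IsWalk v u q → G.NC q →
      G.IsReducedCycle c → Λ'.EdgesIn c →
      (∀ e, c.head? = some e → G.init e = u) →
      ∃ (q' c' : List G.E) (u' : G.V),
        Λ'.IsWalk v u' q' ∧ G.NC q' ∧
        G.IsReducedCycle c' ∧ Λ'.EdgesIn c' ∧
        (∀ e, c'.head? = some e → G.init e = u') ∧
        (∀ x, q'.getLast? = some x →
          (∀ y, c'.head? = some y → y ≠ G.bar x) ∧
          (∀ y, c'.getLast? = some y → y ≠ x)) := by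
  intro n
  induction n with
  | zero =>
      intro q c v u hlen hw hnc hc hce hcu
      have hq : q = [] := List.eq_nil_of_length_eq_zero (Nat.le_zero.mp hlen)
      subst hq
      exact ⟨[], c, u, hw, hnc, hc, hce, hcu, fun x hx => by simp at hx⟩
  | succ n ih =>
      intro q c v u hlen hw hnc hc hce hcu
      rcases List.eq_nil_or_concat q with rfl | ⟨q₀, x, rfl⟩
      · exact ⟨[], c, u, hw, hnc, hc, hce, hcu, fun x hx => by simp at hx⟩
      · rw [List.concat_eq_append] at *
        have hterm : G.term x = u := hw.2.2.2.1 x List.getLast?_concat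
        have hxe : x ∈ Λ'.edges := hw.1 x (by simp)
        have hw₀ : Λ'.IsWalk v (G.init x) q₀ := IsWalk.dropLastConcat hw
        have hnc₀ : G.NC q₀ := List.IsChain.prefix hnc (List.prefix_append q₀ [x])
        have hlen₀ : q₀.length ≤ n := by
          simp only [List.length_append, List.length_singleton] at hlen
          omega
        obtain ⟨e, t, rfl⟩ : ∃ e t, c = e :: t := by
          cases c with
          | nil => exact absurd rfl hc.1.1
          | cons e t => exact ⟨e, t, rfl⟩
        have hiu : G.init e = u := hcu e rfl
        by_cases hbx : e = G.bar x
        · -- cancellation at the head of the cycle: rotate left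
          have hrot := rotRedCycleL hc
          have hce' : Λ'.EdgesIn (t ++ [e]) := by
            intro f hf
            refine hce f ?_
            simp only [List.mem_append, List.mem_cons, List.mem_singleton] at hf ⊢
            tauto
          have hinitx : G.init x = G.term e := by
            rw [hbx, term_bar]
          have hcu' : ∀ f, (t ++ [e]).head? = some f → G.init f = G.init x := by
            intro f hf
            cases t with
            | nil =>
                simp only [List.nil_append, List.head?_cons, Option.some_inj] at hf
                rw [← hf]
                have hloop : G.term e = G.init e := hc.1.2.2 e e rfl rfl
                rw [hinitx, hloop]
            | cons g t' =>
                simp only [List.cons_append, List.head?_cons, Option.some_inj] at hf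
                rw [← hf]
                have h2 : G.term e = G.init g := (List.isChain_cons_cons.mp hc.1.2.1).1
                rw [hinitx, h2]
          exact ih q₀ (t ++ [e]) v (G.init x) hlen₀ hw₀ hnc₀ hrot hce' hcu'
        · by_cases hkx : (e :: t).getLast? = some x
          · -- cancellation at the tail of the cycle: rotate right
            obtain ⟨c₀, k, hcc⟩ :=
              (List.eq_nil_or_concat (e :: t)).resolve_left (by simp)
            rw [List.concat_eq_append] at hcc
            have hkx' : k = x := by
              rw [hcc, List.getLast?_concat] at hkx
              exact Option.some_inj.mp hkx
            subst hkx'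
            rw [hcc] at hc hce
            have hrot := rotRedCycleR hc
            have hce' : Λ'.EdgesIn (k :: c₀) := by
              intro f hf
              refine hce f ?_
              simp only [List.mem_append, List.mem_cons, List.mem_singleton,
                List.not_mem_nil, or_false] at hf ⊢
              tauto
            have hcu' : ∀ f, (k :: c₀).head? = some f → G.init f = G.init k := by
              intro f hf
              simp only [List.head?_cons, Option.some_inj] at hf
              rw [← hf]
            exact ih q₀ (k :: c₀) v (G.init k) hlen₀ hw₀ hnc₀ hrot hce' hcu'
          · -- no cancellation: stop
            refine ⟨q₀ ++ [x], e :: t, u, hw, hnc, hc, hce, hcu, ?_⟩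
            intro x' hx'
            rw [List.getLast?_concat] at hx'
            obtain rfl : x = x' := Option.some_inj.mp hx'
            constructor
            · intro y hy
              simp only [List.head?_cons, Option.some_inj] at hy
              subst hy
              exact fun hcon => hbx hcon
            · intro y hy hcon
              subst hcon
              exact hkx hy

lemma exists_loop (Λ' : Subgraph G) {v u : G.V} {q c : List G.E}
    (hq : Λ'.IsWalk v u q) (hqnc : G.NC q)
    (hc : G.IsReducedCycle c) (hce : Λ'.EdgesIn c)
    (hcu : ∀ e, c.head? = some e → G.init e = u) :
    ∃ w, w ≠ [] ∧ G.IsChain w ∧ G.NC w ∧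
      (∀ e, w.head? = some e → G.init e = v) ∧
      (∀ e, w.getLast? = some e → G.term e = v) ∧ Λ'.EdgesIn w := by
  obtain ⟨q', c', u', hw', hnc', hc', hce', hcu', hjun⟩ :=
    conj_aux Λ' q.length q c v u le_rfl hq hqnc hc hce hcu
  have hcne : c' ≠ [] := hc'.1.1
  have hrw := IsWalk.rbar hw'
  set rq := (q'.map G.bar).reverse with hrq
  have hlastq : ∀ x, q'.getLast? = some x → rq.head? = some (G.bar x) := by
    intro x hx
    rw [hrq, ← List.map_reverse, List.head?_map, List.head?_reverse, hx]
    rfl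
  refine ⟨q' ++ c' ++ rq, ?_, ?_, ?_, ?_, ?_, ?_⟩
  · simp [hcne]
  · rw [show G.IsChain (q' ++ c' ++ rq) ↔ _ from List.isChain_append]
    refine ⟨?_, hrw.2.1, ?_⟩
    · rw [List.isChain_append]
      refine ⟨hw'.2.1, hc'.1.2.1, ?_⟩
      intro a ha y hy
      rw [hw'.2.2.2.1 a ha, (hcu' y hy).symm]
    · intro a ha y hy
      rw [List.getLast?_append_of_ne_nil _ hcne] at ha
      have h1 : G.term a = u' := by
        obtain ⟨hd, hhd⟩ : ∃ hd, c'.head? = some hd := by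
          cases c' with
          | nil => exact absurd rfl hcne
          | cons g t => exact ⟨g, rfl⟩
        rw [hc'.1.2.2 hd a hhd ha]
        exact hcu' hd hhd
      rw [h1]
      exact (hrw.2.2.1 y hy).symm
  · rw [show G.NC (q' ++ c' ++ rq) ↔ _ from List.isChain_append]
    refine ⟨?_, NC.rbar hnc', ?_⟩
    · rw [List.isChain_append]
      refine ⟨hnc', hc'.2.1, ?_⟩
      intro a ha y hy
      exact ((hjun a ha).1 y hy)
    · intro a ha y hy
      rw [List.getLast?_append_of_ne_nil _ hcne] at ha
      cases hql : q'.getLast? with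
      | none =>
          exfalso
          have : q' = [] := List.getLast?_eq_none_iff.mp hql
          subst this
          simp [hrq] at hy
      | some x =>
          have := hlastq x hql
          rw [this] at hy
          obtain rfl : G.bar x = y := Option.some_inj.mp hy
          intro hcon
          exact ((hjun x hql).2 a ha) (bar_inj hcon.symm)
  · intro f hf
    cases q' with
    | nil =>
        simp only [List.nil_append, List.map_nil, List.reverse_nil, List.append_nil] at hf hrq
        rw [hrq] at hf
        simp only [List.append_nil] at hf
        exact (hcu' f hf).trans (hw'.2.2.2.2 rfl).1.symm
    | cons g t =>
        simp only [List.cons_append, List.head?_cons, Option.some_inj] at hf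
        subst hf
        exact hw'.2.2.1 _ rfl
  · intro f hf
    cases hq' : q' with
    | nil =>
        subst hq'
        rw [hrq] at hf
        simp only [List.map_nil, List.reverse_nil, List.append_nil, List.nil_append] at hf
        obtain ⟨hd, hhd⟩ : ∃ hd, c'.head? = some hd := by
          cases c' with
          | nil => exact absurd rfl hcne
          | cons g t => exact ⟨g, rfl⟩
        have h1 : G.term f = G.init hd := hc'.1.2.2 hd f hhd hf
        rw [h1, hcu' hd hhd]
        exact (hw'.2.2.2.2 rfl).1.symm
    | cons g t =>
        have hrne : rq ≠ [] := by
          rw [hrq, hq']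
          simp
        rw [List.getLast?_append_of_ne_nil _ hrne] at hf
        exact hrw.2.2.2.1 f hf
  · intro f hf
    simp only [List.mem_append] at hf
    rcases hf with (hf | hf) | hf
    · exact hw'.1 f hf
    · exact hce' f hf
    · exact hrw.1 f hf
lemma comp_eq {H D₁ D₂ : Subgraph G} (h1 : D₁.IsCompOf H) (h2 : D₂.IsCompOf H)
    {v w : G.V} (hv : v ∈ D₁.verts) (hw : w ∈ D₂.verts) (hr : H.Reaches v w) :
    D₁ = D₂ := by
  obtain ⟨b₁, hb₁, hv₁, he₁⟩ := h1
  obtain ⟨b₂, hb₂, hv₂, he₂⟩ := h2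
  rw [hv₁] at hv
  rw [hv₂] at hw
  have h1w : H.Reaches b₁ w := hv.trans hr
  have hverts : D₁.verts = D₂.verts := by
    rw [hv₁, hv₂]
    ext x
    constructor
    · intro hx
      exact hw.trans (h1w.symm.trans hx)
    · intro hx
      exact h1w.trans (hw.symm.trans hx)
  refine ext' hverts ?_
  rw [he₁, he₂, hverts]

lemma IsCompOf.verts_subset {H D : Subgraph G} (h : D.IsCompOf H) :
    D.verts ⊆ H.verts := by
  obtain ⟨b, hb, hv, he⟩ := h
  rw [hv]
  exact fun x hx => Reaches.mem_right hx

lemma IsCompOf.reaches_of_mem {H D : Subgraph G} (h : D.IsCompOf H)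
    {x y : G.V} (hx : x ∈ D.verts) (hy : y ∈ D.verts) : H.Reaches x y := by
  obtain ⟨b, hb, hv, he⟩ := h
  rw [hv] at hx hy
  exact hx.symm.trans hy

lemma IsCompOf.term_mem {H D : Subgraph G} (h : D.IsCompOf H)
    {e : G.E} (he : e ∈ H.edges) (hi : G.init e ∈ D.verts) :
    G.term e ∈ D.verts := by
  obtain ⟨b, hb, hv, hed⟩ := h
  rw [hv] at hi ⊢
  exact hi.trans (Reaches.single he)
lemma min_walk_head_not_mem {Λ' C Da Db : Subgraph G}
    (hC : C.IsCompOf (full G)) (hDa : Da.IsCompOf (C.inter Λ'))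
    {p : List G.E} {a b : G.V}
    (ha : a ∈ Da.verts) (hb : b ∈ Db.verts)
    (hw : (full G).IsWalk a b p)
    (hmin : ∀ l, (∃ a' ∈ Da.verts, ∃ b' ∈ Db.verts, (full G).IsWalk a' b' l) →
      p.length ≤ l.length)
    {e : G.E} (hhd : p.head? = some e) : e ∉ Λ'.edges := by
  intro heΛ
  obtain ⟨rest, rfl⟩ : ∃ rest, p = e :: rest := by
    cases p with
    | nil => simp at hhd
    | cons f t =>
        simp only [List.head?_cons, Option.some_inj] at hhd
        exact ⟨t, by rw [hhd]⟩
  have hia : G.init e = a := hw.2.2.1 e rfl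
  have haC : a ∈ C.verts := by
    have := hDa.verts_subset ha
    exact this.1
  have heC : e ∈ C.edges := by
    obtain ⟨v₀, hv₀, hCv, hCe⟩ := hC
    rw [hCe]
    exact ⟨Set.mem_univ e, by rw [hia]; exact haC⟩
  have heK : e ∈ (C.inter Λ').edges := ⟨heC, heΛ⟩
  have hterm : G.term e ∈ Da.verts := hDa.term_mem heK (by rw [hia]; exact ha)
  have := hmin rest ⟨G.term e, hterm, b, hb, hw.tail⟩
  simp only [List.length_cons] at this
  omega
lemma chain'_append_of {α : Type*} {R : α → α → Prop} {l₁ l₂ : List α}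
    (h₁ : l₁.Chain' R) (h₂ : l₂.Chain' R)
    (h : ∀ x y, l₁.getLast? = some x → l₂.head? = some y → R x y) :
    (l₁ ++ l₂).Chain' R :=
  List.isChain_append.mpr ⟨h₁, h₂, fun x hx y hy => h x y hx hy⟩

lemma main_aux {Λ' C : Subgraph G}
    (hrel : (full G).ForestRel Λ')
    (hC : C.IsCompOf (full G))
    {D₁ D₂ : Subgraph G}
    (hD₁ : D₁.IsCompOf (C.inter Λ')) (hD₂ : D₂.IsCompOf (C.inter Λ'))
    (hT₁ : ¬ D₁.IsForest) (hT₂ : ¬ D₂.IsForest) : D₁ = D₂ := by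
  classical
  rw [Subgraph.IsForest] at hT₁ hT₂
  push_neg at hT₁ hT₂
  obtain ⟨c₁, hc₁r, hc₁e⟩ := hT₁
  obtain ⟨c₂, hc₂r, hc₂e⟩ := hT₂
  have hKC : (C.inter Λ').verts ⊆ C.verts := fun x hx => hx.1
  have hKΛv : (C.inter Λ').verts ⊆ Λ'.verts := fun x hx => hx.2
  have hKΛ : (C.inter Λ').edges ⊆ Λ'.edges := fun e he => he.2
  have hD₁K : D₁.verts ⊆ (C.inter Λ').verts := hD₁.verts_subset
  have hD₂K : D₂.verts ⊆ (C.inter Λ').verts := hD₂.verts_subset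
  have hD₁e : D₁.edges ⊆ (C.inter Λ').edges := by
    obtain ⟨bb, hb, hv, he⟩ := id hD₁
    rw [he]; exact fun e he' => he'.1
  have hD₂e : D₂.edges ⊆ (C.inter Λ').edges := by
    obtain ⟨bb, hb, hv, he⟩ := id hD₂
    rw [he]; exact fun e he' => he'.1
  have hD₁init : ∀ e ∈ D₁.edges, G.init e ∈ D₁.verts := by
    obtain ⟨bb, hb, hv, he⟩ := id hD₁
    rw [he]; exact fun e he' => he'.2
  have hD₂init : ∀ e ∈ D₂.edges, G.init e ∈ D₂.verts := by
    obtain ⟨bb, hb, hv, he⟩ := id hD₂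
    rw [he]; exact fun e he' => he'.2
  obtain ⟨bb₁, hbb₁, hv₁eq, he₁eq⟩ := id hD₁
  obtain ⟨bb₂, hbb₂, hv₂eq, he₂eq⟩ := id hD₂
  have hb₁D : bb₁ ∈ D₁.verts := by rw [hv₁eq]; exact .refl _ hbb₁
  have hb₂D : bb₂ ∈ D₂.verts := by rw [hv₂eq]; exact .refl _ hbb₂
  have hreach : (full G).Reaches bb₁ bb₂ :=
    hC.reaches_of_mem (hKC (hD₁K hb₁D)) (hKC (hD₂K hb₂D))
  have hPex : ∃ l, ∃ a' ∈ D₁.verts, ∃ b' ∈ D₂.verts, (full G).IsWalk a' b' l := by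
    obtain ⟨l, hl⟩ := hreach.exists_walk
    exact ⟨l, bb₁, hb₁D, bb₂, hb₂D, hl⟩
  obtain ⟨p, hp, hpmin⟩ := exists_min_walklist _ hPex
  obtain ⟨a, haD, b, hbD, hwp⟩ := hp
  by_cases hpe : p = []
  · subst hpe
    have hab : a = b := (hwp.2.2.2.2 rfl).1
    refine comp_eq hD₁ hD₂ haD hbD ?_
    rw [← hab]
    exact .refl a (hD₁K haD)
  · exfalso
    have hpnc : G.NC p := by
      refine min_nc (fun a' b' e h => ?_) ⟨a, haD, b, hbD, hwp⟩ hpmin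
      obtain ⟨x, hx, y, hy, hw'⟩ := h
      exact ⟨x, hx, y, hy, hw'.delete⟩
    obtain ⟨e₀, he₀⟩ : ∃ e, p.head? = some e := by
      cases p with
      | nil => exact absurd rfl hpe
      | cons f t => exact ⟨f, rfl⟩
    obtain ⟨f₀, hf₀⟩ : ∃ e, p.getLast? = some e :=
      ⟨p.getLast hpe, List.getLast?_eq_getLast hpe⟩
    have he₀Λ : e₀ ∉ Λ'.edges :=
      min_walk_head_not_mem hC hD₁ haD hbD hwp hpmin he₀
    have hwpr := hwp.rbar
    have hminr : ∀ l, (∃ a' ∈ D₂.verts, ∃ b' ∈ D₁.verts, (full G).IsWalk a' b' l) →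
        ((p.map G.bar).reverse).length ≤ l.length := by
      intro l hl
      obtain ⟨x, hx, y, hy, hw'⟩ := hl
      have := hpmin ((l.map G.bar).reverse) ⟨y, hy, x, hx, hw'.rbar⟩
      simp only [List.length_reverse, List.length_map] at this ⊢
      exact this
    have hprhd : ((p.map G.bar).reverse).head? = some (G.bar f₀) := by
      rw [← List.map_reverse, List.head?_map, List.head?_reverse, hf₀]; rfl
    have hbf₀Λ : G.bar f₀ ∉ Λ'.edges :=
      min_walk_head_not_mem hC hD₂ hbD haD hwpr hminr hprhd
    have hprlast : ((p.map G.bar).reverse).getLast? = some (G.bar e₀) := by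
      rw [List.getLast?_reverse, List.head?_map, he₀]; rfl
    have hprne : (p.map G.bar).reverse ≠ [] := by
      intro h
      rw [List.reverse_eq_nil_iff, List.map_eq_nil_iff] at h
      exact hpe h
    -- loop at a through D₁
    obtain ⟨e₁, he₁⟩ : ∃ e, c₁.head? = some e := by
      cases c₁ with
      | nil => exact absurd rfl hc₁r.1.1
      | cons f t => exact ⟨f, rfl⟩
    obtain ⟨e₂, he₂⟩ : ∃ e, c₂.head? = some e := by
      cases c₂ with
      | nil => exact absurd rfl hc₂r.1.1
      | cons f t => exact ⟨f, rfl⟩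
    have hu₁ : G.init e₁ ∈ D₁.verts :=
      hD₁init e₁ (hc₁e e₁ (List.mem_of_mem_head? he₁))
    have hu₂ : G.init e₂ ∈ D₂.verts :=
      hD₂init e₂ (hc₂e e₂ (List.mem_of_mem_head? he₂))
    have hra : (C.inter Λ').Reaches a (G.init e₁) := by
      have h1 := haD; have h2 := hu₁
      rw [hv₁eq] at h1 h2
      exact h1.symm.trans h2
    have hrb : (C.inter Λ').Reaches b (G.init e₂) := by
      have h1 := hbD; have h2 := hu₂
      rw [hv₂eq] at h1 h2
      exact h1.symm.trans h2
    obtain ⟨q₁, hq₁w, hq₁nc⟩ := hra.exists_reduced_walk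
    obtain ⟨q₂, hq₂w, hq₂nc⟩ := hrb.exists_reduced_walk
    have hc₁Λ : Λ'.EdgesIn c₁ := fun f hf => hKΛ (hD₁e (hc₁e f hf))
    have hc₂Λ : Λ'.EdgesIn c₂ := fun f hf => hKΛ (hD₂e (hc₂e f hf))
    obtain ⟨w₁, hw₁ne, hw₁ch, hw₁nc, hw₁hd, hw₁lt, hw₁ed⟩ :=
      exists_loop Λ' (hq₁w.mono hKΛv hKΛ) hq₁nc hc₁r hc₁Λ (by
        intro f hf
        rw [he₁] at hf
        rw [← Option.some_inj.mp hf])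
    obtain ⟨w₂, hw₂ne, hw₂ch, hw₂nc, hw₂hd, hw₂lt, hw₂ed⟩ :=
      exists_loop Λ' (hq₂w.mono hKΛv hKΛ) hq₂nc hc₂r hc₂Λ (by
        intro f hf
        rw [he₂] at hf
        rw [← Option.some_inj.mp hf])
    obtain ⟨g₁, hg₁⟩ : ∃ g, w₁.head? = some g := by
      cases w₁ with
      | nil => exact absurd rfl hw₁ne
      | cons f t => exact ⟨f, rfl⟩
    obtain ⟨k₁, hk₁⟩ : ∃ k, w₁.getLast? = some k :=
      ⟨w₁.getLast hw₁ne, List.getLast?_eq_getLast hw₁ne⟩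
    obtain ⟨g₂, hg₂⟩ : ∃ g, w₂.head? = some g := by
      cases w₂ with
      | nil => exact absurd rfl hw₂ne
      | cons f t => exact ⟨f, rfl⟩
    obtain ⟨k₂, hk₂⟩ : ∃ k, w₂.getLast? = some k :=
      ⟨w₂.getLast hw₂ne, List.getLast?_eq_getLast hw₂ne⟩
    have hg₁Λ : g₁ ∈ Λ'.edges := hw₁ed g₁ (List.mem_of_mem_head? hg₁)
    have hk₁Λ : k₁ ∈ Λ'.edges := hw₁ed k₁ (List.mem_of_mem_getLast? hk₁)
    have hg₂Λ : g₂ ∈ Λ'.edges := hw₂ed g₂ (List.mem_of_mem_head? hg₂)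
    have hk₂Λ : k₂ ∈ Λ'.edges := hw₂ed k₂ (List.mem_of_mem_getLast? hk₂)
    have hvk₁ : G.term k₁ = a := hw₁lt k₁ hk₁
    have hvg₁ : G.init g₁ = a := hw₁hd g₁ hg₁
    have hvg₂ : G.init g₂ = b := hw₂hd g₂ hg₂
    have hvk₂ : G.term k₂ = b := hw₂lt k₂ hk₂
    have hie₀ : G.init e₀ = a := hwp.2.2.1 e₀ he₀
    have htf₀ : G.term f₀ = b := hwp.2.2.2.1 f₀ hf₀
    -- head?/getLast? of the chunks
    have hw2pr_hd : (w₂ ++ (p.map G.bar).reverse).head? = some g₂ := by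
      rw [List.head?_append_of_ne_nil _ hw₂ne]; exact hg₂
    have hw2pr_lt : (w₂ ++ (p.map G.bar).reverse).getLast? = some (G.bar e₀) := by
      rw [List.getLast?_append_of_ne_nil _ hprne]; exact hprlast
    have hw2pr_ne : w₂ ++ (p.map G.bar).reverse ≠ [] := by
      simp [hw₂ne]
    have hmid_hd : (p ++ (w₂ ++ (p.map G.bar).reverse)).head? = some e₀ := by
      rw [List.head?_append_of_ne_nil _ hpe]; exact he₀
    have hmid_lt : (p ++ (w₂ ++ (p.map G.bar).reverse)).getLast? = some (G.bar e₀) := by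
      rw [List.getLast?_append_of_ne_nil _ hw2pr_ne]; exact hw2pr_lt
    have hmid_ne : p ++ (w₂ ++ (p.map G.bar).reverse) ≠ [] := by
      simp [hpe]
    have hW_hd : (w₁ ++ (p ++ (w₂ ++ (p.map G.bar).reverse))).head? = some g₁ := by
      rw [List.head?_append_of_ne_nil _ hw₁ne]; exact hg₁
    have hW_lt : (w₁ ++ (p ++ (w₂ ++ (p.map G.bar).reverse))).getLast? = some (G.bar e₀) := by
      rw [List.getLast?_append_of_ne_nil _ hmid_ne]; exact hmid_lt
    -- the big reduced cycle
    have hWch : List.Chain' (fun e f => G.term e = G.init f)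
        (w₁ ++ (p ++ (w₂ ++ (p.map G.bar).reverse))) := by
      refine chain'_append_of hw₁ch ?_ ?_
      · refine chain'_append_of hwp.2.1 ?_ ?_
        · refine chain'_append_of hw₂ch hwpr.2.1 ?_
          intro x y hx hy
          rw [hk₂] at hx
          rw [hprhd] at hy
          obtain rfl : k₂ = x := Option.some_inj.mp hx
          obtain rfl : G.bar f₀ = y := Option.some_inj.mp hy
          show G.term k₂ = G.init (G.bar f₀)
          rw [hvk₂, show G.init (G.bar f₀) = G.term f₀ from rfl, htf₀]
        · intro x y hx hy
          rw [hf₀] at hx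
          rw [hw2pr_hd] at hy
          obtain rfl : f₀ = x := Option.some_inj.mp hx
          obtain rfl : g₂ = y := Option.some_inj.mp hy
          show G.term f₀ = G.init g₂
          rw [htf₀, hvg₂]
      · intro x y hx hy
        rw [hk₁] at hx
        rw [hmid_hd] at hy
        obtain rfl : k₁ = x := Option.some_inj.mp hx
        obtain rfl : e₀ = y := Option.some_inj.mp hy
        show G.term k₁ = G.init e₀
        rw [hvk₁, hie₀]
    have hWnc : List.Chain' (fun e f => f ≠ G.bar e)
        (w₁ ++ (p ++ (w₂ ++ (p.map G.bar).reverse))) := by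
      refine chain'_append_of hw₁nc ?_ ?_
      · refine chain'_append_of hpnc ?_ ?_
        · refine chain'_append_of hw₂nc (NC.rbar hpnc) ?_
          intro x y hx hy
          rw [hk₂] at hx
          rw [hprhd] at hy
          obtain rfl : k₂ = x := Option.some_inj.mp hx
          obtain rfl : G.bar f₀ = y := Option.some_inj.mp hy
          intro hcon
          apply hbf₀Λ
          rw [hcon]
          exact Λ'.bar_mem hk₂Λ
        · intro x y hx hy
          rw [hf₀] at hx
          rw [hw2pr_hd] at hy
          obtain rfl : f₀ = x := Option.some_inj.mp hx
          obtain rfl : g₂ = y := Option.some_inj.mp hy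
          intro hcon
          apply hbf₀Λ
          rw [← hcon]
          exact hg₂Λ
      · intro x y hx hy
        rw [hk₁] at hx
        rw [hmid_hd] at hy
        obtain rfl : k₁ = x := Option.some_inj.mp hx
        obtain rfl : e₀ = y := Option.some_inj.mp hy
        intro hcon
        apply he₀Λ
        rw [hcon]
        exact Λ'.bar_mem hk₁Λ
    have hWwr : ∀ e f, (w₁ ++ (p ++ (w₂ ++ (p.map G.bar).reverse))).head? = some e →
        (w₁ ++ (p ++ (w₂ ++ (p.map G.bar).reverse))).getLast? = some f →
        G.term f = G.init e := by
      intro e f hhead hlast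
      rw [hW_hd] at hhead
      rw [hW_lt] at hlast
      obtain rfl : g₁ = e := Option.some_inj.mp hhead
      obtain rfl : G.bar e₀ = f := Option.some_inj.mp hlast
      rw [term_bar, hie₀, hvg₁]
    have hWnwr : ∀ e f, (w₁ ++ (p ++ (w₂ ++ (p.map G.bar).reverse))).head? = some e →
        (w₁ ++ (p ++ (w₂ ++ (p.map G.bar).reverse))).getLast? = some f →
        e ≠ G.bar f := by
      intro e f hhead hlast
      rw [hW_hd] at hhead
      rw [hW_lt] at hlast
      obtain rfl : g₁ = e := Option.some_inj.mp hhead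
      obtain rfl : G.bar e₀ = f := Option.some_inj.mp hlast
      rw [G.bar_bar]
      intro hcon
      apply he₀Λ
      rw [← hcon]
      exact hg₁Λ
    have hed : Λ'.EdgesIn (w₁ ++ (p ++ (w₂ ++ (p.map G.bar).reverse))) :=
      hrel _ ⟨⟨⟨by simp [hw₁ne], hWch, hWwr⟩, hWnc, hWnwr⟩, fun e _ => Set.mem_univ e⟩
    refine he₀Λ (hed e₀ ?_)
    refine List.mem_append.mpr (Or.inr ?_)
    exact List.mem_append.mpr (Or.inl (List.mem_of_mem_head? he₀))
end Subgraph

end SGraph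

/-- If a graph `Λ` (here: the full subgraph of `G`) is a forest
relative to a subgraph `Λ'`, and `C` is a connected component of `Λ` with
`C ∩ Λ'` nonempty, then at most one connected component of `C ∩ Λ'` fails to
be a tree, i.e. contains a reduced cycle. -/
theorem at_most_one_non_tree_component
    (G : SGraph) [Fintype G.V] [Fintype G.E]
    (Λ' C : SGraph.Subgraph G)
    (hsub : Λ'.le G.full)
    (hrel : (G.full).ForestRel Λ')
    (hC : C.IsCompOf G.full)
    (hne : (C.inter Λ').verts.Nonempty) :
    ∀ D₁ D₂ : SGraph.Subgraph G,
      D₁.IsCompOf (C.inter Λ') → D₂.IsCompOf (C.inter Λ') →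
      ¬ D₁.IsForest → ¬ D₂.IsForest → D₁ = D₂ := by
  intro D₁ D₂ hD₁ hD₂ hT₁ hT₂
  exact SGraph.Subgraph.main_aux hrel hC hD₁ hD₂ hT₁ hT₂
end

section
/- Let Λ be a graph, Λ_K a subgraph of Λ, and Λ' any subgraph of Λ. If Λ is a strong forest relative to Λ_K, then Λ' is a strong forest relative to Λ' ∩ Λ_K. (This is the graph-theoretic heart of the fact that the strong relative coloring test is inherited under combinatorial immersions.) -/
namespace SGraph

variable {G : SGraph}

/-- A walk, defined recursively: list of edges, start, end. -/
def Walk (G : SGraph) : List G.E → G.V → G.V → Prop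
  | [], p, q => p = q
  | e :: t, p, q => G.init e = p ∧ Walk G t (G.term e) q

/-- A (linearly) reduced list of edges. -/
def Red (G : SGraph) (l : List G.E) : Prop :=
  List.Chain' (fun e f => f ≠ G.bar e) l

lemma bar_eq_iff {e f : G.E} : e = G.bar f ↔ f = G.bar e := by
  constructor <;> (rintro rfl; rw [G.bar_bar])

lemma walk_append {l₁ l₂ : List G.E} {p q r : G.V}
    (h₁ : G.Walk l₁ p q) (h₂ : G.Walk l₂ q r) : G.Walk (l₁ ++ l₂) p r := by
  induction l₁ generalizing p with
  | nil => cases h₁; exact h₂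
  | cons e t ih => exact ⟨h₁.1, ih h₁.2⟩

lemma walk_append_iff {l₁ l₂ : List G.E} {p r : G.V} :
    G.Walk (l₁ ++ l₂) p r ↔ ∃ q, G.Walk l₁ p q ∧ G.Walk l₂ q r := by
  induction l₁ generalizing p with
  | nil =>
    simp only [List.nil_append]
    exact ⟨fun h => ⟨p, rfl, h⟩, fun ⟨q, hq, h⟩ => by cases hq; exact h⟩
  | cons e t ih =>
    constructor
    · rintro ⟨he, hw⟩
      obtain ⟨q, h1, h2⟩ := ih.mp hw
      exact ⟨q, ⟨he, h1⟩, h2⟩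
    · rintro ⟨q, ⟨he, h1⟩, h2⟩
      exact ⟨he, ih.mpr ⟨q, h1, h2⟩⟩

lemma walk_isChain {l : List G.E} {p q : G.V} (h : G.Walk l p q) : G.IsChain l := by
  induction l generalizing p with
  | nil => exact List.isChain_nil
  | cons e t ih =>
    refine List.isChain_cons.mpr ⟨?_, ih h.2⟩
    intro f hf
    cases t with
    | nil => simp at hf
    | cons g t' => simp only [List.head?_cons, Option.mem_def, Option.some.injEq] at hf
                   cases hf; exact h.2.1.symm

lemma walk_head {l : List G.E} {p q : G.V} (h : G.Walk l p q) :
    ∀ e, l.head? = some e → G.init e = p := by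
  cases l with
  | nil => intro e he; simp at he
  | cons f t => intro e he; simp only [List.head?_cons, Option.some.injEq] at he
                cases he; exact h.1

lemma walk_getLast {l : List G.E} {p q : G.V} (h : G.Walk l p q) :
    ∀ e, l.getLast? = some e → G.term e = q := by
  induction l generalizing p with
  | nil => intro e he; simp at he
  | cons f t ih =>
    intro e he
    cases t with
    | nil => simp only [List.getLast?_singleton, Option.some.injEq] at he
             cases he; exact h.2
    | cons g t' =>
      rw [List.getLast?_cons_cons] at he
      exact ih h.2 e he

lemma term_mem_verts {H : Subgraph G} {e : G.E} (he : e ∈ H.edges) :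
    G.term e ∈ H.verts := H.init_mem (H.bar_mem he)

lemma reaches_trans {H : Subgraph G} {p q r : G.V}
    (h₁ : H.Reaches p q) (h₂ : H.Reaches q r) : H.Reaches p r := by
  induction h₁ with
  | refl v hv => exact h₂
  | step e he h ih => exact .step e he (ih h₂)

lemma reaches_snoc {H : Subgraph G} {p : G.V} {e : G.E}
    (h : H.Reaches p (G.init e)) (he : e ∈ H.edges) : H.Reaches p (G.term e) :=
  reaches_trans h (.step e he (.refl _ (term_mem_verts he)))

lemma reaches_symm {H : Subgraph G} {p q : G.V} (h : H.Reaches p q) :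
    H.Reaches q p := by
  induction h with
  | refl v hv => exact .refl v hv
  | step e he h ih =>
    have : H.Reaches _ (G.init (G.bar e)) := ih
    have := reaches_snoc this (H.bar_mem he)
    rwa [show G.term (G.bar e) = G.init e from by rw [term, G.bar_bar]] at this

lemma reaches_toWalk {H : Subgraph G} {p q : G.V} (h : H.Reaches p q) :
    ∃ l, G.Walk l p q ∧ ∀ e ∈ l, e ∈ H.edges := by
  induction h with
  | refl v hv => exact ⟨[], rfl, by simp⟩
  | step e he h ih =>
    obtain ⟨l, hw, hl⟩ := ih
    refine ⟨e :: l, ⟨rfl, hw⟩, ?_⟩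
    intro f hf
    rcases List.mem_cons.mp hf with rfl | hf
    · exact he
    · exact hl f hf

lemma walk_toReaches {H : Subgraph G} {l : List G.E} {p q : G.V}
    (hw : G.Walk l p q) (hl : ∀ e ∈ l, e ∈ H.edges) (hp : p ∈ H.verts) :
    H.Reaches p q := by
  induction l generalizing p with
  | nil => cases hw; exact .refl _ hp
  | cons e t ih =>
    obtain ⟨he, hw⟩ := hw
    cases he
    exact .step e (hl e (List.mem_cons_self))
      (ih hw (fun f hf => hl f (List.mem_cons_of_mem _ hf)) (term_mem_verts (hl e (List.mem_cons_self))))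

/-- Any walk can be reduced keeping endpoints, using a subset of the edges. -/
lemma walk_reduce {l : List G.E} {p q : G.V} (hw : G.Walk l p q) :
    ∃ l', G.Walk l' p q ∧ G.Red l' ∧ ∀ e ∈ l', e ∈ l := by
  induction l generalizing p with
  | nil => exact ⟨[], hw, List.isChain_nil, by simp⟩
  | cons a t ih =>
    obtain ⟨ha, hw⟩ := hw
    obtain ⟨l', hw', hr', hsub⟩ := ih hw
    cases l' with
    | nil =>
      cases hw'
      exact ⟨[a], ⟨ha, rfl⟩, List.isChain_singleton a, by simp⟩
    | cons c t' =>
      by_cases hc : c = G.bar a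
      · subst hc
        obtain ⟨hc1, hw''⟩ := hw'
        refine ⟨t', ?_, hr'.tail, fun e he => List.mem_cons_of_mem _ (hsub e (List.mem_cons_of_mem _ he))⟩
        rwa [show G.term (G.bar a) = p from by rw [term, G.bar_bar]; exact ha] at hw''
      · refine ⟨a :: c :: t', ⟨ha, hw'⟩, List.isChain_cons_cons.mpr ⟨hc, hr'⟩, ?_⟩
        intro e he
        rcases List.mem_cons.mp he with rfl | he
        · exact List.mem_cons_self
        · exact List.mem_cons_of_mem _ (hsub e he)

/-- Extract a non-reduced consecutive pair from a non-reduced list. -/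
lemma not_red_split {l : List G.E} (h : ¬ G.Red l) :
    ∃ A x B, l = A ++ x :: G.bar x :: B := by
  induction l with
  | nil => exact absurd List.isChain_nil h
  | cons a t ih =>
    cases t with
    | nil => exact absurd (List.isChain_singleton a) h
    | cons b t' =>
      rw [Red] at h; unfold List.Chain' at h; rw [List.isChain_cons_cons] at h
      push_neg at h
      by_cases hb : b = G.bar a
      · exact ⟨[], a, t', by rw [hb]; rfl⟩
      · obtain ⟨A, x, B, hs⟩ := ih (h hb)
        exact ⟨a :: A, x, B, by rw [hs]; rfl⟩

/-- A closed reduced walk with no wrap-around cancellation is a reduced cycle. -/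
lemma mk_rcycle {l : List G.E} {p : G.V} (hne : l ≠ []) (hw : G.Walk l p p)
    (hr : G.Red l)
    (hwrap : ∀ e f, l.head? = some e → l.getLast? = some f → e ≠ G.bar f) :
    G.IsReducedCycle l := by
  refine ⟨⟨hne, walk_isChain hw, ?_⟩, hr, hwrap⟩
  intro e f he hf
  rw [walk_getLast hw f hf, walk_head hw e he]

/-- Decomposition of a closed reduced walk whose first edge cancels its last. -/
lemma closed_red_decomp {l : List G.E} {p : G.V} {e f : G.E}
    (hw : G.Walk l p p) (hr : G.Red l)
    (hh : l.head? = some e) (hl2 : l.getLast? = some f) (hef : e = G.bar f) :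
    ∃ M, l = e :: M ++ [f] ∧ M ≠ [] ∧ G.Walk M (G.term e) (G.term e) ∧ G.Red M ∧
      G.init f = G.term e ∧ G.term f = p := by
  cases l with
  | nil => simp at hh
  | cons a rest =>
  simp only [List.head?_cons, Option.some.injEq] at hh
  cases hh
  have hrest : rest ≠ [] := by
    rintro rfl
    simp only [List.getLast?_singleton, Option.some.injEq] at hl2
    cases hl2
    exact G.bar_ne e hef.symm
  have hfl : rest.getLast? = some f := by
    rw [← hl2]; cases rest with
    | nil => exact absurd rfl hrest
    | cons b t => rw [List.getLast?_cons_cons]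
  have hsplit : rest = rest.dropLast ++ [f] := by
    have := List.dropLast_append_getLast hrest
    rw [List.getLast?_eq_getLast hrest, Option.some.injEq] at hfl
    rw [hfl] at this
    exact this.symm
  set M := rest.dropLast with hM
  obtain ⟨he, hwrest⟩ := hw
  rw [hsplit] at hwrest
  obtain ⟨m, hwM, hif, htf⟩ := walk_append_iff.mp hwrest
  have hfb : f = G.bar e := bar_eq_iff.mp hef
  have him : G.init f = G.term e := by rw [hfb]; rfl
  have hm : m = G.term e := by rw [← hif, him]
  subst hm
  have hMne : M ≠ [] := by
    rintro hMnil
    rw [hMnil] at hsplit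
    rw [hsplit] at hr
    have := (List.isChain_cons_cons.mp hr).1
    exact this (bar_eq_iff.mp hef)
  have hredM : G.Red M := by
    rw [hsplit] at hr
    have := hr.tail
    exact (List.isChain_append.mp this).1
  have htfp : G.term f = p := htf
  exact ⟨M, by rw [hsplit]; rfl, hMne, hwM, hredM, him, htfp⟩

/-- The connected component of `p` in the full graph. -/
def compOf (G : SGraph) (p : G.V) : Subgraph G where
  verts := {x | (full G).Reaches p x}
  edges := {e | (full G).Reaches p (G.init e)}
  bar_mem := fun e he => reaches_snoc he (Set.mem_univ e)
  init_mem := fun _ he => he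

lemma mem_compOf_self (p : G.V) : p ∈ (compOf G p).verts :=
  .refl p (Set.mem_univ p)

lemma compOf_isCompOf (p : G.V) : (compOf G p).IsCompOf (full G) :=
  ⟨p, Set.mem_univ p, rfl, by ext e; simp [full, compOf]⟩

/-- A nonempty closed reduced walk contains an edge of `ΛK`. -/
lemma closed_red_hits (ΛK : Subgraph G) (h1 : (full G).ForestRel ΛK) :
    ∀ n (l : List G.E) (p : G.V), l.length = n → l ≠ [] → G.Walk l p p → G.Red l →
      ∃ g ∈ l, g ∈ ΛK.edges := by
  intro n
  induction n using Nat.strong_induction_on with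
  | _ n IH =>
  intro l p hn hne hw hr
  obtain ⟨e, he⟩ : ∃ e, l.head? = some e := by
    cases l with
    | nil => exact absurd rfl hne
    | cons a t => exact ⟨a, rfl⟩
  have hf : l.getLast? = some (l.getLast hne) := List.getLast?_eq_getLast hne
  set f := l.getLast hne with hfdef
  by_cases hef : e = G.bar f
  · obtain ⟨M, hlM, hMne, hwM, hrM, _, _⟩ := closed_red_decomp hw hr he hf hef
    obtain ⟨g, hgM, hg⟩ := IH M.length (by rw [hlM] at hn; simp at hn; omega) M _ rfl hMne hwM hrM
    exact ⟨g, by rw [hlM]; simp [hgM], hg⟩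
  · have hcyc := mk_rcycle hne hw hr (by
      intro e' f' he' hf'
      rw [he] at he'; rw [hf] at hf'
      cases he'; cases hf'; exact hef)
    have hK := h1 l ⟨hcyc, fun _ _ => Set.mem_univ _⟩
    have heml : e ∈ l := by
      cases l with
      | nil => exact absurd rfl hne
      | cons a t => cases he; exact List.mem_cons_self
    exact ⟨e, heml, hK e heml⟩

/-- Core lemma: if `P` is a reduced walk from `p` to `q`, `Q` is any walk from
`q` back to `p` with edges in `ΛK`, and `p, q ∈ ΛK`, then all edges of `P`
lie in `ΛK`. -/
lemma core (ΛK : Subgraph G) (h : (full G).StrongForestRel ΛK) :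
    ∀ n m (P Q : List G.E) (p q : G.V), P.length = n → Q.length = m →
      G.Walk P p q → G.Red P → G.Walk Q q p → (∀ e ∈ Q, e ∈ ΛK.edges) →
      p ∈ ΛK.verts → q ∈ ΛK.verts → ∀ e ∈ P, e ∈ ΛK.edges := by
  intro n
  induction n using Nat.strong_induction_on with
  | _ n IH1 =>
  intro m
  induction m using Nat.strong_induction_on with
  | _ m IH2 =>
  intro P Q p q hn hm hwP hrP hwQ hQK hp hq
  cases P with
  | nil => intro e he; simp at he
  | cons a P' =>
  by_cases hQr : G.Red Q
  · cases Q with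
    | nil =>
      -- `q = p`, the walk `P` is closed
      have hqp : q = p := hwQ
      subst hqp
      have hfq : (a :: P').getLast? = some ((a :: P').getLast (by simp)) :=
        List.getLast?_eq_getLast (by simp)
      set f := (a :: P').getLast (by simp) with hfd
      by_cases hef : a = G.bar f
      · -- wrap cancellation: P = a :: M ++ [f] with f = ā
        obtain ⟨M, hlM, hMne, hwM, hrM, hinitf, htermf⟩ :=
          closed_red_decomp hwP hrP rfl hfq hef
        obtain ⟨g, hgM, hgK⟩ :=
          closed_red_hits ΛK h.1 M.length M (G.term a) rfl hMne hwM hrM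
        obtain ⟨M₁, M₂, hMs⟩ := List.append_of_mem hgM
        subst hMs
        obtain ⟨b1, hwM₁, hwg2⟩ := walk_append_iff.mp hwM
        obtain ⟨hig, hwM₂⟩ := hwg2
        set w := G.init g with hwdef
        have hb1 : b1 = w := hig.symm
        subst hb1
        -- the two halves of P
        have hwP₁ : G.Walk (a :: M₁) q w := ⟨hwP.1, hwM₁⟩
        have hwP₂ : G.Walk (g :: (M₂ ++ [f])) w q :=
          ⟨rfl, walk_append hwM₂ ⟨hinitf, htermf⟩⟩
        have hPsplit : a :: (M₁ ++ g :: M₂) ++ [f] = (a :: M₁) ++ (g :: (M₂ ++ [f])) := by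
          simp
        have hrP' : G.Red ((a :: M₁) ++ (g :: (M₂ ++ [f]))) := by
          rw [← hPsplit, ← hlM]; exact hrP
        have hrP₁ : G.Red (a :: M₁) := (List.isChain_append.mp hrP').1
        have hrP₂ : G.Red (g :: (M₂ ++ [f])) := (List.isChain_append.mp hrP').2.1
        -- lengths
        have hlen : n = M₁.length + M₂.length + 3 := by
          rw [hlM] at hn; simp at hn; omega
        -- w lies in ΛK and in the component of q
        have hwK : w ∈ ΛK.verts := ΛK.init_mem hgK
        have hreach : (full G).Reaches q w :=
          walk_toReaches hwP₁ (fun _ _ => Set.mem_univ _) (Set.mem_univ _)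
        have hqmem : q ∈ ((compOf G q).inter ΛK).verts := ⟨mem_compOf_self q, hq⟩
        have hwmem : w ∈ ((compOf G q).inter ΛK).verts := ⟨hreach, hwK⟩
        rcases h.2 (compOf G q) (compOf_isCompOf q) with hemp | hconn
        · exact absurd hemp (Set.nonempty_iff_ne_empty.mp ⟨q, hqmem⟩)
        · obtain ⟨R₁, hwR₁, hR₁e⟩ := reaches_toWalk (hconn.2 w hwmem q hqmem)
          obtain ⟨R₂, hwR₂, hR₂e⟩ := reaches_toWalk (hconn.2 q hqmem w hwmem)
          have h₁ := IH1 (a :: M₁).length (by simp; omega) R₁.length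
            (a :: M₁) R₁ q w rfl rfl hwP₁ hrP₁ hwR₁
            (fun e he => (hR₁e e he).2) hq hwK
          have h₂ := IH1 (g :: (M₂ ++ [f])).length (by simp; omega) R₂.length
            (g :: (M₂ ++ [f])) R₂ w q rfl rfl hwP₂ hrP₂ hwR₂
            (fun e he => (hR₂e e he).2) hwK hq
          intro e he
          rw [hlM, hPsplit] at he
          rcases List.mem_append.mp he with h' | h'
          · exact h₁ e h'
          · exact h₂ e h'
      · -- P itself is a reduced cycle
        have hcyc := mk_rcycle (by simp) hwP hrP (by
          intro e' f' he' hf'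
          simp only [List.head?_cons, Option.some.injEq] at he'
          rw [hfq] at hf'
          cases he'; cases hf'; exact hef)
        exact fun e he => h.1 _ ⟨hcyc, fun _ _ => Set.mem_univ _⟩ e he
    | cons x Q' =>
      have hfq : (a :: P').getLast? = some ((a :: P').getLast (by simp)) :=
        List.getLast?_eq_getLast (by simp)
      set f := (a :: P').getLast (by simp) with hfd
      have hyq : (x :: Q').getLast? = some ((x :: Q').getLast (by simp)) :=
        List.getLast?_eq_getLast (by simp)
      set y := (x :: Q').getLast (by simp) with hyd
      by_cases hb : x = G.bar f
      · -- cancel last edge of P against first edge of Q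
        have hfK : f ∈ ΛK.edges := by
          have : G.bar x ∈ ΛK.edges := ΛK.bar_mem (hQK x (List.mem_cons_self))
          rwa [bar_eq_iff.mp hb]
        have hPs : (a :: P').dropLast ++ [f] = a :: P' :=
          List.dropLast_append_getLast? f hfq
        set Pd := (a :: P').dropLast with hPdd
        rw [← hPs] at hwP hrP
        obtain ⟨m1, hwPd, hwf⟩ := walk_append_iff.mp hwP
        have hif : G.init f = m1 := hwf.1
        have hm1 : m1 = G.term x := by
          rw [← hif, bar_eq_iff.mp hb]; rfl
        subst hm1
        have hrPd : G.Red Pd := (List.isChain_append.mp hrP).1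
        have hwQ' : G.Walk Q' (G.term x) p := hwQ.2
        have hxv : G.term x ∈ ΛK.verts :=
          term_mem_verts (hQK x (List.mem_cons_self))
        have hlen : Pd.length < n := by
          rw [← hn, ← hPs]; simp
        have hPdK := IH1 Pd.length hlen Q'.length Pd Q' p (G.term x) rfl rfl
          hwPd hrPd hwQ' (fun e he => hQK e (List.mem_cons_of_mem _ he)) hp hxv
        intro e he
        rw [← hPs] at he
        rcases List.mem_append.mp he with h' | h'
        · exact hPdK e h'
        · simp at h'; subst h'; exact hfK
      · by_cases hc : a = G.bar y
        · -- cancel first edge of P against last edge of Q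
          have hyQ : y ∈ x :: Q' := by
            rw [← List.dropLast_append_getLast? y hyq]
            simp
          have haK : a ∈ ΛK.edges := by rw [hc]; exact ΛK.bar_mem (hQK y hyQ)
          have hQs : (x :: Q').dropLast ++ [y] = x :: Q' :=
            List.dropLast_append_getLast? y hyq
          set Qd := (x :: Q').dropLast with hQdd
          rw [← hQs] at hwQ
          obtain ⟨m2, hwQd, hwy⟩ := walk_append_iff.mp hwQ
          have hm2 : m2 = G.term a := by
            rw [← hwy.1, bar_eq_iff.mp hc]; rfl
          subst hm2
          have hwP' : G.Walk P' (G.term a) q := hwP.2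
          have hrP' : G.Red P' := hrP.tail
          have hav : G.term a ∈ ΛK.verts := term_mem_verts haK
          have hlen : P'.length < n := by rw [← hn]; simp
          have hPK := IH1 P'.length hlen Qd.length P' Qd (G.term a) q rfl rfl
            hwP' hrP' hwQd (fun e he => hQK e (by rw [← hQs]; simp [he])) hav hq
          intro e he
          rcases List.mem_cons.mp he with rfl | h'
          · exact haK
          · exact hPK e h'
        · -- P ++ Q is a reduced cycle
          have hwPQ : G.Walk ((a :: P') ++ (x :: Q')) p p := walk_append hwP hwQ
          have hrPQ : G.Red ((a :: P') ++ (x :: Q')) := by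
            refine List.isChain_append.mpr ⟨hrP, hQr, ?_⟩
            intro u hu v hv
            rw [hfq] at hu
            simp only [List.head?_cons, Option.mem_def, Option.some.injEq] at hu hv
            subst hu; subst hv; exact hb
          have hcyc := mk_rcycle (by simp) hwPQ hrPQ (by
            intro e' f' he' hf'
            simp only [List.cons_append, List.head?_cons, Option.some.injEq] at he'
            rw [List.getLast?_append_of_ne_nil _ (by simp), hyq] at hf'
            cases he'; cases hf'; exact hc)
          have hK := h.1 _ ⟨hcyc, fun _ _ => Set.mem_univ _⟩
          exact fun e he => hK e (List.mem_append.mpr (Or.inl he))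
  · -- Q is not reduced: splice out a cancelling pair
    obtain ⟨A, x, B, hQs⟩ := not_red_split hQr
    rw [hQs] at hwQ
    obtain ⟨m1, hwA, hwx⟩ := walk_append_iff.mp hwQ
    obtain ⟨hix, hwbx⟩ := hwx
    obtain ⟨hibx, hwB⟩ := hwbx
    have hterm2 : G.term (G.bar x) = m1 := by rw [term, G.bar_bar]; exact hix
    rw [hterm2] at hwB
    have hwQ2 : G.Walk (A ++ B) q p := walk_append hwA hwB
    have hlen : (A ++ B).length < m := by rw [← hm, hQs]; simp
    refine IH2 (A ++ B).length hlen (a :: P') (A ++ B) p q hn rfl hwP hrP hwQ2 ?_ hp hq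
    intro e he
    apply hQK
    rw [hQs]
    rcases List.mem_append.mp he with h' | h' <;> simp [h']

/-- All initial vertices of a walk in `Λ'` starting in a component `C` of `Λ'`
stay in `C`. -/
lemma walk_inits_in_comp {Λ' C : Subgraph G} {v : G.V}
    (hverts : C.verts = {w | Λ'.Reaches v w}) :
    ∀ (l : List G.E) (p q : G.V), G.Walk l p q → (∀ e ∈ l, e ∈ Λ'.edges) →
      p ∈ C.verts → ∀ e ∈ l, G.init e ∈ C.verts := by
  intro l
  induction l with
  | nil => intro p q _ _ _ e he; simp at he
  | cons a t ih =>
    intro p q hw hl hp e he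
    obtain ⟨ha, hw'⟩ := hw
    have hterm : G.term a ∈ C.verts := by
      rw [hverts] at hp ⊢
      have : Λ'.Reaches v (G.init a) := by rwa [ha]
      exact reaches_snoc this (hl a (List.mem_cons_self))
    rcases List.mem_cons.mp he with rfl | he'
    · rwa [ha]
    · exact ih (G.term a) q hw' (fun f hf => hl f (List.mem_cons_of_mem _ hf)) hterm e he'

end SGraph

/-- If `Λ` (here: the full subgraph of `G`) is a strong forest
relative to a subgraph `Λ_K`, then any subgraph `Λ'` is a strong forest
relative to `Λ' ∩ Λ_K`. -/
theorem strong_forest_rel_inherited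
    (G : SGraph) [Fintype G.V] [Fintype G.E]
    (ΛK Λ' : SGraph.Subgraph G)
    (h : (G.full).StrongForestRel ΛK) :
    Λ'.StrongForestRel (Λ'.inter ΛK) := by
  open SGraph in
  constructor
  · intro l hl e he
    exact ⟨hl.2 e he, h.1 l ⟨hl.1, fun _ _ => Set.mem_univ _⟩ e he⟩
  · intro C hC
    rcases Set.eq_empty_or_nonempty (C.inter (Λ'.inter ΛK)).verts with hemp | ⟨p₀, hp₀⟩
    · exact Or.inl hemp
    refine Or.inr ⟨⟨p₀, hp₀⟩, ?_⟩
    intro p hp q hq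
    obtain ⟨hpC, hpΛ', hpK⟩ := hp
    obtain ⟨hqC, hqΛ', hqK⟩ := hq
    obtain ⟨v, hv, hverts, hedges⟩ := hC
    have hpv : Λ'.Reaches v p := by rw [hverts] at hpC; exact hpC
    have hqv : Λ'.Reaches v q := by
      have := hqC; rw [hverts] at this; exact this
    have hpq : Λ'.Reaches p q := reaches_trans (reaches_symm hpv) hqv
    obtain ⟨l, hwl, hle⟩ := reaches_toWalk hpq
    obtain ⟨P, hwP, hrP, hPsub⟩ := walk_reduce hwl
    have hPΛ' : ∀ e ∈ P, e ∈ Λ'.edges := fun e he => hle e (hPsub e he)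
    have hreach : (SGraph.full G).Reaches p q :=
      walk_toReaches hwP (fun _ _ => Set.mem_univ _) (Set.mem_univ _)
    have hpmem : p ∈ ((compOf G p).inter ΛK).verts := ⟨mem_compOf_self p, hpK⟩
    have hqmem : q ∈ ((compOf G p).inter ΛK).verts := ⟨hreach, hqK⟩
    rcases h.2 _ (compOf_isCompOf p) with hemp2 | hconn
    · exact absurd hemp2 (Set.nonempty_iff_ne_empty.mp ⟨p, hpmem⟩)
    obtain ⟨Q, hwQ, hQe⟩ := reaches_toWalk (hconn.2 q hqmem p hpmem)
    have hPK := core ΛK h P.length Q.length P Q p q rfl rfl hwP hrP hwQ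
      (fun e he => (hQe e he).2) hpK hqK
    have hinit : ∀ e ∈ P, G.init e ∈ C.verts :=
      walk_inits_in_comp hverts P p q hwP hPΛ' hpC
    refine walk_toReaches hwP ?_ ⟨hpC, hpΛ', hpK⟩
    intro e he
    exact ⟨by rw [hedges]; exact ⟨hPΛ' e he, hinit e he⟩, hPΛ' e he, hPK e he⟩
end
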